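/- Let ((V,E), f) be a signal over a finite connected graph with a fixed G-ordering ≺. Then there exists a unique rooted tree T = (V, E_T) on the vertex set V, rooted at the ≺-minimal vertex, such that for every non-root vertex v there exists an edge e ∈ E with: v is the ≺-minimum of the connected component of v in the subgraph G_{≺e} (all vertices and edges strictly preceding e), and the parent p(v) of v in T is the ≺-minimum of the connected component of v in the subgraph G_{⪯e} (all vertices and edges up to and including e). -/

import Mathlib

open scoped Classical

/-- A (multi)graph given by source and target maps on an edge type. -/
structure SigGraph (V E : Type*) where
  src : E → V
  tgt : E → V

namespace SigGraph

variable {V E : Type*} (G : SigGraph V E)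

/-- `e` is an edge joining `x` and `y`. -/
def Ends (e : E) (x y : V) : Prop :=
  (G.src e = x ∧ G.tgt e = y) ∨ (G.src e = y ∧ G.tgt e = x)

/-- The graph is connected. -/
def Connected : Prop :=
  ∀ a b : V, Relation.ReflTransGen (fun x y => ∃ e, G.Ends e x y) a b

/-- Extension of a vertex signal to vertices and edges, `f(e) = max f(V(e))`. -/
def sig (f : V → ℝ) : V ⊕ E → ℝ
  | .inl v => f v
  | .inr e => max (f (G.src e)) (f (G.tgt e))

/-- `pos` realizes a `G`-ordering: a total ordering of `V ⊕ E` along which the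
signal is nondecreasing and every vertex precedes each edge incident to it. -/
def IsGOrdering (f : V → ℝ) (pos : V ⊕ E → ℕ) : Prop :=
  Function.Injective pos ∧
  (∀ a b, pos a ≤ pos b → G.sig f a ≤ G.sig f b) ∧
  (∀ e : E, pos (.inl (G.src e)) < pos (.inr e) ∧ pos (.inl (G.tgt e)) < pos (.inr e))

/-- Connectivity within the subgraph `G_{<k}` of elements with position `< k`. -/
def ConnB (pos : V ⊕ E → ℕ) (k : ℕ) (a b : V) : Prop :=
  pos (.inl a) < k ∧ pos (.inl b) < k ∧
    Relation.ReflTransGen (fun x y => ∃ e, pos (.inr e) < k ∧ G.Ends e x y) a b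

/-- `m` is the `≺`-minimum of the connected component of `v` in `G_{<k}`. -/
def IsCompMin (pos : V ⊕ E → ℕ) (k : ℕ) (m v : V) : Prop :=
  G.ConnB pos k m v ∧ ∀ w, G.ConnB pos k v w → pos (.inl m) ≤ pos (.inl w)

/-- The `≺`-maximal endpoint of an edge. -/
def maxEnd (pos : V ⊕ E → ℕ) (e : E) : V :=
  if pos (.inl (G.src e)) ≤ pos (.inl (G.tgt e)) then G.tgt e else G.src e

/-- `(p, L)` is a basin hierarchy tree of the signal `(G, f)` with respect to the
`G`-ordering `pos`, rooted at the `≺`-minimal vertex `r`, with linking-vertex map `L`. -/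
structure IsBHT (f : V → ℝ) (pos : V ⊕ E → ℕ) (r : V) (p : V → V) (L : V → V) : Prop where
  ordering : G.IsGOrdering f pos
  root_min : ∀ v, pos (.inl r) ≤ pos (.inl v)
  root_fix : p r = r
  reaches : ∀ v, ∃ n, p^[n] v = r
  spec : ∀ v, v ≠ r → ∃ e : E,
    G.IsCompMin pos (pos (.inr e)) v v ∧
    G.IsCompMin pos (pos (.inr e) + 1) (p v) v ∧
    L v = G.maxEnd pos e

end SigGraph

/-- `u` is an ancestor of `v` in the tree with parent map `p` (`u ⪯_T v`). -/
def Anc {V : Type*} (p : V → V) (u v : V) : Prop := ∃ n, p^[n] v = u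

/-- `f(𝔏(v))`, with value `+∞` at the root. -/
noncomputable def fLink {V : Type*} (f : V → ℝ) (r : V) (L : V → V) (v : V) : EReal :=
  if v = r then ⊤ else (f (L v) : EReal)

/-- The persistence `pers(v) = f(𝔏(v)) - f(v)` of a vertex in a BHT. -/
noncomputable def persBHT {V : Type*} (f : V → ℝ) (r : V) (L : V → V) (v : V) : EReal :=
  fLink f r L v - (f v : EReal)

namespace SigGraph

variable {V E : Type*} (G : SigGraph V E)

/-- The component of `v` dies at the edge `e`: `v` is the minimum of its component
just before `e` is added, and no longer after. -/
def DiesAt (pos : V ⊕ E → ℕ) (v : V) (e : E) : Prop :=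
  G.IsCompMin pos (pos (.inr e)) v v ∧ ¬ G.IsCompMin pos (pos (.inr e) + 1) v v

/-- The death value of the component created by `v` (`+∞` if permanent). -/
noncomputable def deathVal (f : V → ℝ) (pos : V ⊕ E → ℕ) (v : V) : EReal :=
  if h : ∃ e, G.DiesAt pos v e then ((G.sig f (.inr h.choose) : ℝ) : EReal) else ⊤

/-- The degree-0 persistence diagram of `(G, f)`, as a multiset of intervals
`[birth, death)` (including trivial intervals). -/
noncomputable def PD0 [Fintype V] (f : V → ℝ) (pos : V ⊕ E → ℕ) : Multiset (EReal × EReal) :=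
  Finset.univ.val.map fun v : V => ((f v : EReal), G.deathVal f pos v)

end SigGraph

/-- The nontrivial part of a multiset of intervals. -/
noncomputable def nontriv (M : Multiset (EReal × EReal)) : Multiset (EReal × EReal) :=
  M.filter fun ab => ab.1 < ab.2

/-- The 0-low-persistence filter associated to a BHT `(p, L)` rooted at `r`. -/
noncomputable def LPF {V : Type*} [Fintype V] (f : V → ℝ) (r : V) (p L : V → V)
    (ε : ℝ) (v : V) : ℝ :=
  (insert (f v) ((Finset.univ.filter fun u => Anc p u v ∧ persBHT f r L u < (ε : EReal)).image
    fun u => f (L u))).max' (Finset.insert_nonempty _ _)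

namespace BHTAux

variable {V E : Type*} {G : SigGraph V E} {f : V → ℝ} {pos : V ⊕ E → ℕ}

lemma ends_symm {e : E} {x y : V} (h : G.Ends e x y) : G.Ends e y x := h.symm

lemma ends_lt (hpos : G.IsGOrdering f pos) {e : E} {x y : V} (h : G.Ends e x y) :
    pos (.inl x) < pos (.inr e) ∧ pos (.inl y) < pos (.inr e) := by
  rcases h with ⟨h1, h2⟩ | ⟨h1, h2⟩ <;>
    simpa [← h1, ← h2, and_comm] using hpos.2.2 e

lemma connB_symm {k : ℕ} {a b : V} (h : G.ConnB pos k a b) : G.ConnB pos k b a := by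
  obtain ⟨ha, hb, hp⟩ := h
  refine ⟨hb, ha, ?_⟩
  exact (@Relation.ReflTransGen.stdSymm _ _
    ⟨fun x y ⟨e, hk, he⟩ => ⟨e, hk, ends_symm he⟩⟩).symm _ _ hp

lemma connB_mono {k k' : ℕ} (hk : k ≤ k') {a b : V} (h : G.ConnB pos k a b) :
    G.ConnB pos k' a b := by
  obtain ⟨ha, hb, hp⟩ := h
  exact ⟨lt_of_lt_of_le ha hk, lt_of_lt_of_le hb hk,
    Relation.ReflTransGen.mono (fun x y ⟨e, h1, h2⟩ => ⟨e, lt_of_lt_of_le h1 hk, h2⟩) _ _ hp⟩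

lemma connB_refl {k : ℕ} {v : V} (hv : pos (.inl v) < k) : G.ConnB pos k v v :=
  ⟨hv, hv, Relation.ReflTransGen.refl⟩

/-- Uniqueness of the component minimum. -/
lemma compMin_unique (hpos : G.IsGOrdering f pos) {k : ℕ} {m m' v : V}
    (h : G.IsCompMin pos k m v) (h' : G.IsCompMin pos k m' v) : m = m' := by
  have h1 : pos (.inl m) ≤ pos (.inl m') := h.2 m' (connB_symm h'.1)
  have h2 : pos (.inl m') ≤ pos (.inl m) := h'.2 m (connB_symm h.1)
  have := hpos.1 (le_antisymm h1 h2)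
  exact Sum.inl.injEq m m' ▸ this

/-- Existence of the component minimum. -/
lemma compMin_exists [Fintype V] {k : ℕ} {v : V} (hv : pos (.inl v) < k) :
    ∃ m, G.IsCompMin pos k m v := by
  obtain ⟨m, hm, hmin⟩ := Finset.exists_min_image
    (Finset.univ.filter fun w => G.ConnB pos k v w) (fun w => pos (.inl w))
    ⟨v, by simp [connB_refl hv]⟩
  rw [Finset.mem_filter] at hm
  refine ⟨m, connB_symm hm.2, fun w hw => hmin w ?_⟩
  simp [hw]

/-- Downward monotonicity of being one's own component minimum. -/
lemma min_mono {k k' : ℕ} {v : V} (h : G.IsCompMin pos k v v)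
    (hv : pos (.inl v) < k') (hk : k' ≤ k) : G.IsCompMin pos k' v v :=
  ⟨connB_refl hv, fun w hw => h.2 w (connB_mono hk hw)⟩

/-- `v` is the minimum of its component just after `v` is introduced. -/
lemma min_succ_self (hpos : G.IsGOrdering f pos) (v : V) :
    G.IsCompMin pos (pos (.inl v) + 1) v v := by
  refine ⟨connB_refl (Nat.lt_succ_self _), fun w hw => ?_⟩
  obtain ⟨_, _, hpath⟩ := hw
  rcases hpath.cases_head with h | ⟨c, ⟨e, hlt, hends⟩, _⟩
  · exact le_of_eq (by rw [h])
  · have := (ends_lt hpos hends).1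
    omega

/-- If no edge sits at position `k`, minimality is preserved from `k` to `k+1`. -/
lemma min_stable (hpos : G.IsGOrdering f pos) {k : ℕ} {v : V}
    (hnoe : ∀ e : E, pos (.inr e) ≠ k) (h : G.IsCompMin pos k v v) :
    G.IsCompMin pos (k + 1) v v := by
  have hv : pos (.inl v) < k := h.1.1
  refine ⟨connB_refl (by omega), fun w hw => ?_⟩
  obtain ⟨_, hwlt, hpath⟩ := hw
  have hpath' : Relation.ReflTransGen
      (fun x y => ∃ e, pos (.inr e) < k ∧ G.Ends e x y) v w := by
    refine Relation.ReflTransGen.mono (fun x y ⟨e, hlt, he⟩ => ⟨e, ?_, he⟩) _ _ hpath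
    have := hnoe e; omega
  have hwk : pos (.inl w) < k := by
    rcases hpath'.cases_tail with hwv | ⟨c, _, e, hek, hends⟩
    · rw [hwv]; exact hv
    · exact lt_trans (ends_lt hpos hends).2 hek
  exact h.2 w ⟨hv, hwk, hpath'⟩

/-- For `v ≠ r`, `v` eventually stops being its component's minimum. -/
lemma not_min_big [Fintype V] [Fintype E] (hG : G.Connected)
    (hpos : G.IsGOrdering f pos) {r : V} (hr : ∀ v, pos (.inl r) ≤ pos (.inl v))
    {v : V} (hv : v ≠ r) :
    ∃ k, pos (.inl v) < k ∧ ¬ G.IsCompMin pos k v v := by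
  set K := (Finset.univ.sup pos) + 1 with hK'
  have hK : ∀ a, pos a < K := fun a =>
    Nat.lt_succ_of_le (Finset.le_sup (Finset.mem_univ a))
  refine ⟨K, hK _, fun hmin => ?_⟩
  have hcon : G.ConnB pos K v r :=
    ⟨hK _, hK _, Relation.ReflTransGen.mono (fun x y ⟨e, he⟩ => ⟨e, hK _, he⟩) _ _ (hG v r)⟩
  have h1 := hmin.2 r hcon
  have h2 := hr v
  have := hpos.1 (le_antisymm h1 h2)
  exact hv (by injection this)

/-- The key existence lemma: the merging edge and new minimum. -/
lemma key [Fintype V] [Fintype E] (hG : G.Connected)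
    (hpos : G.IsGOrdering f pos) {r : V} (hr : ∀ v, pos (.inl r) ≤ pos (.inl v))
    {v : V} (hv : v ≠ r) :
    ∃ (m : V) (e : E), G.IsCompMin pos (pos (.inr e)) v v ∧
      G.IsCompMin pos (pos (.inr e) + 1) m v ∧ pos (.inl m) < pos (.inl v) := by
  have hex : ∃ k, pos (.inl v) < k ∧ ¬ G.IsCompMin pos k v v :=
    not_min_big hG hpos hr hv
  obtain ⟨hvN, hnotmin⟩ := Nat.find_spec hex
  set N := Nat.find hex with hNdef
  have hNne : N ≠ pos (.inl v) + 1 := by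
    intro h
    apply hnotmin
    rw [h]
    exact min_succ_self hpos v
  have hN2 : pos (.inl v) + 1 < N := by omega
  have hkN : N = (N - 1) + 1 := by omega
  have hkmin : G.IsCompMin pos (N - 1) v v := by
    have h := Nat.find_min hex (m := N - 1) (by omega)
    push_neg at h
    exact h (by omega)
  have hedge : ∃ e : E, pos (.inr e) = N - 1 := by
    by_contra hne
    push_neg at hne
    apply hnotmin
    rw [hkN]
    exact min_stable hpos hne hkmin
  obtain ⟨e, he⟩ := hedge
  obtain ⟨m, hm⟩ := compMin_exists (G := G) (pos := pos) (k := N) (v := v) (by omega)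
  refine ⟨m, e, he ▸ hkmin, by rw [show pos (.inr e) + 1 = N by omega]; exact hm, ?_⟩
  have hmv : m ≠ v := by
    intro h
    exact hnotmin (h ▸ hm)
  have hle : pos (.inl m) ≤ pos (.inl v) := hm.2 v (connB_refl (by omega))
  rcases lt_or_eq_of_le hle with h | h
  · exact h
  · exact absurd (by injection hpos.1 h) hmv

/-- If `q` satisfies the BHT conditions then `q v ≠ v` for `v ≠ r`. -/
lemma parent_ne {r : V} {q : V → V} (hreach : ∀ v, ∃ n : ℕ, q^[n] v = r)
    {v : V} (hv : v ≠ r) : q v ≠ v := by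
  intro h
  obtain ⟨n, hn⟩ := hreach v
  rw [Function.iterate_fixed h n] at hn
  exact hv hn

end BHTAux

/-- Existence and uniqueness of the Basin Hierarchy Tree: given a signal over a
finite connected graph with a `G`-ordering `pos` and `≺`-minimal vertex `r`, there
is a unique rooted tree on `V` (given by its parent map `p`, rooted at `r`) such
that every non-root vertex `v` is, for some edge `e`, the `≺`-minimum of its
connected component in `G_{≺e}`, while `p v` is the `≺`-minimum of the connected
component of `v` in `G_{⪯e}`. -/
theorem bht_exists_unique {V E : Type*} [Fintype V] [Fintype E]
    (G : SigGraph V E) (hG : G.Connected) (f : V → ℝ) (pos : V ⊕ E → ℕ)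
    (hpos : G.IsGOrdering f pos) (r : V) (hr : ∀ v, pos (.inl r) ≤ pos (.inl v)) :
    ∃! p : V → V,
      p r = r ∧ (∀ v, ∃ n : ℕ, p^[n] v = r) ∧
      ∀ v, v ≠ r → ∃ e : E,
        G.IsCompMin pos (pos (.inr e)) v v ∧
        G.IsCompMin pos (pos (.inr e) + 1) (p v) v := by
  classical
  set p : V → V := fun v => if h : v = r then r else
    (BHTAux.key hG hpos hr h).choose with hp
  have hpr : p r = r := by simp [hp]
  have hspec : ∀ v (hv : v ≠ r), ∃ e : E,
      G.IsCompMin pos (pos (.inr e)) v v ∧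
      G.IsCompMin pos (pos (.inr e) + 1) (p v) v ∧
      pos (.inl (p v)) < pos (.inl v) := by
    intro v hv
    have := (BHTAux.key hG hpos hr hv).choose_spec
    obtain ⟨e, h1, h2, h3⟩ := this
    exact ⟨e, h1, by simpa [hp, hv] using h2, by simpa [hp, hv] using h3⟩
  have hreach : ∀ n (v : V), pos (.inl v) < n → ∃ m : ℕ, p^[m] v = r := by
    intro n
    induction n with
    | zero => intro v h; omega
    | succ n ih =>
      intro v h
      by_cases hv : v = r
      · exact ⟨0, by simp [hv]⟩
      · obtain ⟨e, _, _, hlt⟩ := hspec v hv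
        obtain ⟨m, hm⟩ := ih (p v) (by omega)
        exact ⟨m + 1, by rw [Function.iterate_succ_apply]; exact hm⟩
  refine ⟨p, ⟨hpr, fun v => hreach (pos (.inl v) + 1) v (by omega), fun v hv =>
    (hspec v hv).imp fun e h => ⟨h.1, h.2.1⟩⟩, ?_⟩
  rintro q ⟨hqr, hqreach, hqspec⟩
  funext v
  by_cases hv : v = r
  · rw [hv, hqr, hpr]
  · obtain ⟨e, he1, he2⟩ := hqspec v hv
    obtain ⟨e', he1', he2', _⟩ := hspec v hv
    have hqv : q v ≠ v := BHTAux.parent_ne hqreach hv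
    have hpv : p v ≠ v :=
      BHTAux.parent_ne (fun u => hreach (pos (.inl u) + 1) u (by omega)) hv
    have hnot : ¬ G.IsCompMin pos (pos (.inr e) + 1) v v := fun h =>
      hqv (BHTAux.compMin_unique hpos he2 h)
    have hnot' : ¬ G.IsCompMin pos (pos (.inr e') + 1) v v := fun h =>
      hpv (BHTAux.compMin_unique hpos he2' h)
    have hvlt : pos (.inl v) < pos (.inr e) := he1.1.1
    have hvlt' : pos (.inl v) < pos (.inr e') := he1'.1.1
    have hle : pos (.inr e) ≤ pos (.inr e') := by
      by_contra h
      exact hnot' (BHTAux.min_mono he1 (by omega) (by omega))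
    have hle' : pos (.inr e') ≤ pos (.inr e) := by
      by_contra h
      exact hnot (BHTAux.min_mono he1' (by omega) (by omega))
    have heq : pos (.inr e) = pos (.inr e') := le_antisymm hle hle'
    rw [heq] at he2
    exact BHTAux.compMin_unique hpos he2 he2'
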